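/- Soundness of HFTA construction on terms (Lemma A.2): Let t be a ground term in which every function symbol f_1,…,f_n occurs exactly once, and suppose G, M ⊢ t ↝ H by the HFTA construction rules. Then for every hierarchical tree T = (V, Υ, v_r, E) accepted by H: (1) each Υ(v_{f_i}) is a program that conforms to grammar G(M⁻¹(f_i)); and (2) the accepting run of Υ(v_r) on the root FTA Ω(v_r) labels its root with the final state q_s^{⟦t⟧}, where ⟦t⟧ is the value of t when each f_i is interpreted as Υ(v_{f_i}). -/

import Mathlib

namespace Relish

/-- Alphabet symbols for program and specification trees: DSL constructs,
variables `xᵢ`, constants, binary (relational/logical) operators, and negation. -/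
inductive Alpha (op val bop : Type) : Type where
  | dsl : op → Alpha op val bop
  | var : ℕ → Alpha op val bop
  | cst : val → Alpha op val bop
  | lop : bop → Alpha op val bop
  | neg : Alpha op val bop

/-- Finite trees (terms) over an alphabet. -/
inductive Tree (α : Type) : Type where
  | node : α → List (Tree α) → Tree α

/-- Bottom-up finite tree automaton: states, final states, and transitions
`σ(q₁, …, qₙ) → q`. -/
structure FTA (α Q : Type) : Type where
  states : Set Q
  finals : Set Q
  trans : Set (α × List Q × Q)

/-- A run of an FTA on a tree reaching state `q`, in which every variable leaf
`var i` is assigned the state `leaf i`. -/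
inductive RunFrom {op val bop Q : Type} (A : FTA (Alpha op val bop) Q) (leaf : ℕ → Q) :
    Tree (Alpha op val bop) → Q → Prop where
  | node (a : Alpha op val bop) (ts : List (Tree (Alpha op val bop))) (qs : List Q) (q : Q) :
      (a, qs, q) ∈ A.trans →
      (∀ i : ℕ, a = Alpha.var i → q = leaf i) →
      ts.length = qs.length →
      (∀ p ∈ ts.zip qs, RunFrom A leaf p.1 p.2) →
      RunFrom A leaf (Tree.node a ts) q

/-- Symbols labeling FTA states: grammar nonterminals, variables `xᵢ`, or the
special start/constant symbol `s₀`. -/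
inductive SymT (ν : Type) : Type where
  | nt : ν → SymT ν
  | var : ℕ → SymT ν
  | start : SymT ν

/-- A context-free grammar: productions `s → σ(s₁, …, sₙ)` and a start symbol. -/
structure Grammar (op ν : Type) : Type where
  prods : Set (ν × op × List (SymT ν))
  start : ν

/-- Derivation of a tree from a grammar symbol. -/
inductive Derives {op val bop ν : Type} (G : Grammar op ν) :
    SymT ν → Tree (Alpha op val bop) → Prop where
  | var (i : ℕ) : Derives G (SymT.var i) (Tree.node (Alpha.var i) [])
  | prod (s : ν) (o : op) (ss : List (SymT ν)) (ts : List (Tree (Alpha op val bop))) :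
      (s, o, ss) ∈ G.prods →
      ss.length = ts.length →
      (∀ p ∈ ss.zip ts, Derives G p.1 p.2) →
      Derives G (SymT.nt s) (Tree.node (Alpha.dsl o) ts)

/-- A program (tree) conforms to grammar `G` if it is derivable from the start symbol. -/
def ConformsTo {op val bop ν : Type} (G : Grammar op ν) (t : Tree (Alpha op val bop)) : Prop :=
  Derives G (SymT.nt G.start) t

/-- Evaluation of a program tree under DSL semantics `sem`, binary operator
semantics `bsem`, negation semantics `nsem`, and argument assignment `args`. -/
inductive EvalsTo {op val bop : Type} (sem : op → List val → val)
    (bsem : bop → val → val → val) (nsem : val → val) (args : ℕ → val) :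
    Tree (Alpha op val bop) → val → Prop where
  | var (i : ℕ) : EvalsTo sem bsem nsem args (Tree.node (Alpha.var i) []) (args i)
  | cst (c : val) : EvalsTo sem bsem nsem args (Tree.node (Alpha.cst c) []) c
  | dsl (o : op) (ts : List (Tree (Alpha op val bop))) (cs : List val) :
      ts.length = cs.length →
      (∀ p ∈ ts.zip cs, EvalsTo sem bsem nsem args p.1 p.2) →
      EvalsTo sem bsem nsem args (Tree.node (Alpha.dsl o) ts) (sem o cs)
  | lop (b : bop) (t₁ t₂ : Tree (Alpha op val bop)) (c₁ c₂ : val) :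
      EvalsTo sem bsem nsem args t₁ c₁ →
      EvalsTo sem bsem nsem args t₂ c₂ →
      EvalsTo sem bsem nsem args (Tree.node (Alpha.lop b) [t₁, t₂]) (bsem b c₁ c₂)
  | neg (t : Tree (Alpha op val bop)) (c : val) :
      EvalsTo sem bsem nsem args t c →
      EvalsTo sem bsem nsem args (Tree.node Alpha.neg [t]) (nsem c)

/-- States of `BuildFTA(G, [Q₁, …, Qₘ])`, generated by the Input and Prod rules;
`init i` is the set of values of the i-th initial state set `Qᵢ`. -/
inductive BStates {op val ν : Type} (G : Grammar op ν) (sem : op → List val → val)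
    (arity : ℕ) (init : ℕ → Set val) : SymT ν × val → Prop where
  | input (i : ℕ) (c : val) : i < arity → c ∈ init i →
      BStates G sem arity init (SymT.var i, c)
  | prod (s : ν) (o : op) (ss : List (SymT ν)) (cs : List val) :
      (s, o, ss) ∈ G.prods →
      ss.length = cs.length →
      (∀ p ∈ ss.zip cs, BStates G sem arity init p) →
      BStates G sem arity init (SymT.nt s, sem o cs)

/-- Transitions of `BuildFTA(G, [Q₁, …, Qₘ])` (Input and Prod rules). -/
inductive BTrans {op val ν : Type} (bop : Type) (G : Grammar op ν) (sem : op → List val → val)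
    (arity : ℕ) (init : ℕ → Set val) :
    Alpha op val bop × List (SymT ν × val) × (SymT ν × val) → Prop where
  | input (i : ℕ) (c : val) : i < arity → c ∈ init i →
      BTrans bop G sem arity init (Alpha.var i, [], (SymT.var i, c))
  | prod (s : ν) (o : op) (ss : List (SymT ν)) (cs : List val) :
      (s, o, ss) ∈ G.prods →
      ss.length = cs.length →
      (∀ p ∈ ss.zip cs, BStates G sem arity init p) →
      BTrans bop G sem arity init (Alpha.dsl o, ss.zip cs, (SymT.nt s, sem o cs))

/-- The FTA produced by the `BuildFTA` procedure: final states are all states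
`q_{s₀}^c` where `s₀` is the start symbol of the grammar (Output rule). -/
def buildFTA {op val ν : Type} (bop : Type) (G : Grammar op ν) (sem : op → List val → val)
    (arity : ℕ) (init : ℕ → Set val) : FTA (Alpha op val bop) (SymT ν × val) where
  states := {q | BStates G sem arity init q}
  finals := {q | BStates G sem arity init q ∧ q.1 = SymT.nt G.start}
  trans := {t | BTrans bop G sem arity init t}

/-- Hierarchical finite tree automaton; nodes are tree positions (the root is `[]`). -/
structure HFTA (α Q : Type) : Type where
  nodes : Set (List ℕ)
  fta : List ℕ → FTA α Q
  children : List ℕ → List (List ℕ)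
  inter : Set (Q × Q)

/-- Acceptance of a hierarchical tree `T` by an HFTA `H`, witnessed by root
states `ρ` and input-state assignments `leaf`: every node's term has an
accepting run, and for every edge from `v` to its i-th child `v'`, the final
state at the root of the run on `T v'` is related by the inter-FTA transitions
to the input state used for `xᵢ` in the run on `T v`. -/
def HAcceptWith {op val bop Q : Type} (H : HFTA (Alpha op val bop) Q)
    (T : List ℕ → Tree (Alpha op val bop)) (ρ : List ℕ → Q) (leaf : List ℕ → ℕ → Q) : Prop :=
  ∀ v ∈ H.nodes,
    ρ v ∈ (H.fta v).finals ∧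
    RunFrom (H.fta v) (leaf v) (T v) (ρ v) ∧
    ∀ (i : ℕ) (v' : List ℕ), (H.children v)[i]? = some v' → (ρ v', leaf v i) ∈ H.inter

/-- A hierarchical tree is accepted by an HFTA if some witnesses exist. -/
def HAccepts {op val bop Q : Type} (H : HFTA (Alpha op val bop) Q)
    (T : List ℕ → Tree (Alpha op val bop)) : Prop :=
  ∃ ρ leaf, HAcceptWith H T ρ leaf

/-- States of the FTAs inside a constructed HFTA: a node position paired with an
FTA state `q_s^c`. -/
abbrev TQ (ν val : Type) : Type := List ℕ × SymT ν × val

def emptyFTA {α Q : Type} : FTA α Q := ⟨∅, ∅, ∅⟩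

def mapFTA {α Q Q' : Type} (g : Q → Q') (A : FTA α Q) : FTA α Q' where
  states := g '' A.states
  finals := g '' A.finals
  trans := {t | ∃ a qs q, (a, qs, q) ∈ A.trans ∧ t = (a, qs.map g, g q)}

def tagState {ν val : Type} (i : ℕ) (q : TQ ν val) : TQ ν val := (i :: q.1, q.2)

/-- The values carried by the final states of the root FTA of an HFTA. -/
def rootVals {α ν val : Type} (H : HFTA α (TQ ν val)) : Set val :=
  {c | ∃ q ∈ (H.fta []).finals, q.2.2 = c}

/-- Combine a root FTA `A` with a list of children HFTAs, adding inter-FTA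
transitions from each final state `q_s^c` of a child's root FTA to the input
state `q_{xᵢ}^c` of the root FTA. -/
def combine {α ν val : Type} (A : FTA α (SymT ν × val)) (Hs : List (HFTA α (TQ ν val))) :
    HFTA α (TQ ν val) where
  nodes := {v | v = [] ∨ ∃ i H v', Hs[i]? = some H ∧ v' ∈ H.nodes ∧ v = i :: v'}
  fta := fun v =>
    match v with
    | [] => mapFTA (fun q => (([] : List ℕ), q)) A
    | i :: v' =>
      match Hs[i]? with
      | some H => mapFTA (tagState i) (H.fta v')
      | none => emptyFTA
  children := fun v =>
    match v with
    | [] => (List.range Hs.length).map (fun i => [i])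
    | i :: v' =>
      match Hs[i]? with
      | some H => (H.children v').map (i :: ·)
      | none => []
  inter :=
    {e | ∃ i H q q', Hs[i]? = some H ∧ (q, q') ∈ H.inter ∧ e = (tagState i q, tagState i q')} ∪
    {e | ∃ i H q, Hs[i]? = some H ∧ q ∈ (H.fta []).finals ∧
        e = (tagState i q, (([] : List ℕ), (SymT.var i, q.2.2)))}

/-- FTA for a constant node (Const rule): accepts only the constant `c`. -/
def constFTA {op val ν : Type} (bop : Type) (c : val) :
    FTA (Alpha op val bop) (SymT ν × val) where
  states := {(SymT.start, c)}
  finals := {(SymT.start, c)}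
  trans := {(Alpha.cst c, [], (SymT.start, c))}

/-- FTA for a binary relational/logical operator node (Logical rule). -/
def logicFTA {op val bop ν : Type} (vtrue vfalse : val) (bsem : bop → val → val → val)
    (b : bop) (C₁ C₂ : Set val) : FTA (Alpha op val bop) (SymT ν × val) where
  states := {q | ∃ c ∈ C₁, q = (SymT.var 0, c)} ∪ {q | ∃ c ∈ C₂, q = (SymT.var 1, c)} ∪
      {(SymT.start, vtrue), (SymT.start, vfalse)}
  finals := {(SymT.start, vtrue), (SymT.start, vfalse)}
  trans := {t | ∃ c ∈ C₁, t = (Alpha.var 0, [], (SymT.var 0, c))} ∪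
      {t | ∃ c ∈ C₂, t = (Alpha.var 1, [], (SymT.var 1, c))} ∪
      {t | ∃ c₁ ∈ C₁, ∃ c₂ ∈ C₂,
          t = (Alpha.lop b, [(SymT.var 0, c₁), (SymT.var 1, c₂)], (SymT.start, bsem b c₁ c₂))}

/-- FTA for a negation node (Neg rule). -/
def negFTA {op val bop ν : Type} (vtrue vfalse : val) (nsem : val → val) (C : Set val) :
    FTA (Alpha op val bop) (SymT ν × val) where
  states := {q | ∃ c ∈ C, q = (SymT.var 0, c)} ∪ {(SymT.start, vtrue), (SymT.start, vfalse)}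
  finals := {(SymT.start, vtrue), (SymT.start, vfalse)}
  trans := {t | ∃ c ∈ C, t = (Alpha.var 0, [], (SymT.var 0, c))} ∪
      {t | ∃ c ∈ C, t = (Alpha.neg, [(SymT.var 0, c)], (SymT.start, nsem c))}

/-- Initial value sets obtained from the final states of children root FTAs. -/
def initsOf {α ν val : Type} (Hs : List (HFTA α (TQ ν val))) : ℕ → Set val :=
  fun i =>
    match Hs[i]? with
    | some H => rootVals H
    | none => ∅

/-- Ground specifications `ψ`: constants, applications of function symbols,
binary relational/logical operators, and negation.  A ground specification in
which the topmost constructor is `bin` or `neg` is a formula; one built only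
from `cst`/`app` is a term. -/
inductive GS (F val bop : Type) : Type where
  | cst : val → GS F val bop
  | app : F → List (GS F val bop) → GS F val bop
  | bin : bop → GS F val bop → GS F val bop → GS F val bop
  | neg : GS F val bop → GS F val bop

/-- `ψ` is a term (no logical structure). -/
inductive IsTerm {F val bop : Type} : GS F val bop → Prop where
  | cst (c : val) : IsTerm (GS.cst c)
  | app (f : F) (ts : List (GS F val bop)) : (∀ t ∈ ts, IsTerm t) → IsTerm (GS.app f ts)

/-- `ψ` is a formula. -/
inductive IsForm {F val bop : Type} : GS F val bop → Prop where
  | bin (b : bop) (ψ₁ ψ₂ : GS F val bop) : IsForm (GS.bin b ψ₁ ψ₂)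
  | neg (ψ : GS F val bop) : IsForm ψ → IsForm (GS.neg ψ)

/-- Function symbol `g` occurs at position `p` in a ground specification. -/
inductive OccursAt {F val bop : Type} : GS F val bop → F → List ℕ → Prop where
  | here (f : F) (ts : List (GS F val bop)) : OccursAt (GS.app f ts) f []
  | app (f g : F) (ts : List (GS F val bop)) (i : ℕ) (t : GS F val bop) (p : List ℕ) :
      ts[i]? = some t → OccursAt t g p → OccursAt (GS.app f ts) g (i :: p)
  | binl (b : bop) (ψ₁ ψ₂ : GS F val bop) (g : F) (p : List ℕ) :
      OccursAt ψ₁ g p → OccursAt (GS.bin b ψ₁ ψ₂) g (0 :: p)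
  | binr (b : bop) (ψ₁ ψ₂ : GS F val bop) (g : F) (p : List ℕ) :
      OccursAt ψ₂ g p → OccursAt (GS.bin b ψ₁ ψ₂) g (1 :: p)
  | neg (ψ : GS F val bop) (g : F) (p : List ℕ) :
      OccursAt ψ g p → OccursAt (GS.neg ψ) g (0 :: p)

/-- Every function symbol occurs (at most) once in the ground specification. -/
def OccursOnce {F val bop : Type} (Φ : GS F val bop) : Prop :=
  ∀ (g : F) (p₁ p₂ : List ℕ), OccursAt Φ g p₁ → OccursAt Φ g p₂ → p₁ = p₂

/-- Evaluation of a ground specification under an interpretation `I` assigning a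
program to every function symbol. -/
inductive SpecEval {op val bop F : Type} [Inhabited val] (sem : op → List val → val)
    (bsem : bop → val → val → val) (nsem : val → val)
    (I : F → Tree (Alpha op val bop)) : GS F val bop → val → Prop where
  | cst (c : val) : SpecEval sem bsem nsem I (GS.cst c) c
  | app (f : F) (ts : List (GS F val bop)) (cs : List val) (c : val) :
      ts.length = cs.length →
      (∀ p ∈ ts.zip cs, SpecEval sem bsem nsem I p.1 p.2) →
      EvalsTo sem bsem nsem (fun i => cs.getD i default) (I f) c →
      SpecEval sem bsem nsem I (GS.app f ts) c
  | bin (b : bop) (ψ₁ ψ₂ : GS F val bop) (c₁ c₂ : val) :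
      SpecEval sem bsem nsem I ψ₁ c₁ →
      SpecEval sem bsem nsem I ψ₂ c₂ →
      SpecEval sem bsem nsem I (GS.bin b ψ₁ ψ₂) (bsem b c₁ c₂)
  | neg (ψ : GS F val bop) (c : val) :
      SpecEval sem bsem nsem I ψ c →
      SpecEval sem bsem nsem I (GS.neg ψ) (nsem c)

/-- `I ⊨ Φ`: the ground specification evaluates to true under interpretation `I`. -/
def Satisfies {op val bop F : Type} [Inhabited val] (sem : op → List val → val)
    (bsem : bop → val → val → val) (nsem : val → val) (vtrue : val)
    (I : F → Tree (Alpha op val bop)) (Φ : GS F val bop) : Prop :=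
  SpecEval sem bsem nsem I Φ vtrue

/-- HFTA construction judgment `𝒢, ℳ ⊢ ψ ↝ ℋ` (rules Const, Func, Logical, Neg).
`gram f` is the grammar `𝒢(ℳ⁻¹(f))` associated with occurrence symbol `f`. -/
inductive BuildsH {op val bop ν F : Type} (gram : F → Grammar op ν)
    (sem : op → List val → val) (bsem : bop → val → val → val) (nsem : val → val)
    (vtrue vfalse : val) : GS F val bop → HFTA (Alpha op val bop) (TQ ν val) → Prop where
  | cst (c : val) :
      BuildsH gram sem bsem nsem vtrue vfalse (GS.cst c) (combine (constFTA bop c) [])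
  | app (f : F) (ts : List (GS F val bop)) (Hs : List (HFTA (Alpha op val bop) (TQ ν val))) :
      ts.length = Hs.length →
      (∀ p ∈ ts.zip Hs, BuildsH gram sem bsem nsem vtrue vfalse p.1 p.2) →
      BuildsH gram sem bsem nsem vtrue vfalse (GS.app f ts)
        (combine (buildFTA bop (gram f) sem ts.length (initsOf Hs)) Hs)
  | bin (b : bop) (ψ₁ ψ₂ : GS F val bop) (H₁ H₂ : HFTA (Alpha op val bop) (TQ ν val)) :
      BuildsH gram sem bsem nsem vtrue vfalse ψ₁ H₁ →
      BuildsH gram sem bsem nsem vtrue vfalse ψ₂ H₂ →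
      BuildsH gram sem bsem nsem vtrue vfalse (GS.bin b ψ₁ ψ₂)
        (combine (logicFTA vtrue vfalse bsem b (rootVals H₁) (rootVals H₂)) [H₁, H₂])
  | neg (ψ : GS F val bop) (H₁ : HFTA (Alpha op val bop) (TQ ν val)) :
      BuildsH gram sem bsem nsem vtrue vfalse ψ H₁ →
      BuildsH gram sem bsem nsem vtrue vfalse (GS.neg ψ)
        (combine (negFTA vtrue vfalse nsem (rootVals H₁)) [H₁])

/-- The Final rule: restrict the final states of the root node's FTA to `{q_{s₀}^⊤}`. -/
def finalize {α ν val : Type} (vtrue : val) (H : HFTA α (TQ ν val)) :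
    HFTA α (TQ ν val) where
  nodes := H.nodes
  fta := fun v =>
    if v = [] then
      ⟨(H.fta []).states, {q | q ∈ (H.fta []).finals ∧ q.2 = (SymT.start, vtrue)},
        (H.fta []).trans⟩
    else H.fta v
  children := H.children
  inter := H.inter


/-- The final states of `A` reachable by (accepting) runs of `A` on program `p`. -/
def reachFinals {op val bop Q : Type} (A : FTA (Alpha op val bop) Q)
    (p : Tree (Alpha op val bop)) : Set Q :=
  {q | q ∈ A.finals ∧ ∃ leaf, RunFrom A leaf p q}

/-- The `Propagate` procedure (Algorithm 3): for every node `v ∈ W` (the nodes of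
the occurrences of the function being propagated), shrink the final states of
`Ω(v)` to those reachable by runs on the program `p`, and remove every
inter-FTA transition whose source is a final state that was removed. -/
def propagate {op val bop Q : Type} (H : HFTA (Alpha op val bop) Q)
    (p : Tree (Alpha op val bop)) (W : Set (List ℕ)) : HFTA (Alpha op val bop) Q where
  nodes := H.nodes
  fta := fun v =>
    ⟨(H.fta v).states,
      {q | q ∈ (H.fta v).finals ∧ (v ∈ W → q ∈ reachFinals (H.fta v) p)},
      (H.fta v).trans⟩
  children := H.children
  inter := {e | e ∈ H.inter ∧
      ∀ v ∈ W, e.1 ∈ (H.fta v).finals → e.1 ∈ reachFinals (H.fta v) p}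

/-- Relaxation of a ground specification: each occurrence of a function symbol
of `Φ` is replaced by a fresh occurrence symbol; `Mi` maps each occurrence
symbol back to the original symbol (i.e. `Mi = ℳ⁻¹`). -/
inductive Relax {F F₀ val bop : Type} (Mi : F → F₀) :
    GS F₀ val bop → GS F val bop → Prop where
  | cst (c : val) : Relax Mi (GS.cst c) (GS.cst c)
  | app (f : F₀) (f' : F) (ts : List (GS F₀ val bop)) (ts' : List (GS F val bop)) :
      Mi f' = f →
      ts.length = ts'.length →
      (∀ p ∈ ts.zip ts', Relax Mi p.1 p.2) →
      Relax Mi (GS.app f ts) (GS.app f' ts')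
  | bin (b : bop) (ψ₁ ψ₂ : GS F₀ val bop) (ψ₁' ψ₂' : GS F val bop) :
      Relax Mi ψ₁ ψ₁' → Relax Mi ψ₂ ψ₂' →
      Relax Mi (GS.bin b ψ₁ ψ₂) (GS.bin b ψ₁' ψ₂')
  | neg (ψ : GS F₀ val bop) (ψ' : GS F val bop) :
      Relax Mi ψ ψ' → Relax Mi (GS.neg ψ) (GS.neg ψ')

/-- Returning traces of the backtracking procedure `FindProgs` (Algorithm 2).
`occNodes f` is the set of HFTA nodes of the occurrences of the original
function symbol `f`.  `FPRet occNodes H P R` holds iff `FindProgs(H, P, ℳ)` can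
return the total assignment `R`: either all symbols are assigned, or some
unassigned symbol `f` gets a program `p` read off (at the node of one of its
occurrences) from a hierarchical tree accepted by the current HFTA such that
propagating `p` yields an HFTA with non-empty language, and the recursive call
returns `R`. -/
inductive FPRet {op val bop Q F₀ : Type} [DecidableEq F₀]
    (occNodes : F₀ → Set (List ℕ)) :
    HFTA (Alpha op val bop) Q → (F₀ → Option (Tree (Alpha op val bop))) →
    (F₀ → Tree (Alpha op val bop)) → Prop where
  | done (H : HFTA (Alpha op val bop) Q) (P : F₀ → Option (Tree (Alpha op val bop)))
      (R : F₀ → Tree (Alpha op val bop)) :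
      (∀ f, P f = some (R f)) → FPRet occNodes H P R
  | step (H : HFTA (Alpha op val bop) Q) (P : F₀ → Option (Tree (Alpha op val bop)))
      (R : F₀ → Tree (Alpha op val bop)) (f : F₀) (v : List ℕ)
      (p : Tree (Alpha op val bop)) (T : List ℕ → Tree (Alpha op val bop)) :
      P f = none →
      v ∈ occNodes f →
      HAccepts H T →
      T v = p →
      (∃ T', HAccepts (propagate H p (occNodes f)) T') →
      FPRet occNodes (propagate H p (occNodes f)) (Function.update P f (some p)) R →
      FPRet occNodes H P R

/-- The inductive synthesis phase of Algorithm 1 (lines 8--11): relax the ground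
specification `Φ`, build the HFTA for the relaxed specification (rules
Const/Func/Logical/Neg followed by the Final rule), and run `FindProgs` on it
starting from the everywhere-unassigned map, obtaining programs `R`. -/
def InductiveSynth {op val bop ν F₀ : Type} [Inhabited val] [DecidableEq F₀]
    (G : F₀ → Grammar op ν) (sem : op → List val → val) (bsem : bop → val → val → val)
    (nsem : val → val) (vtrue vfalse : val)
    (Φ : GS F₀ val bop) (R : F₀ → Tree (Alpha op val bop)) : Prop :=
  ∃ (F : Type) (Mi : F → F₀) (Φ' : GS F val bop) (H' : HFTA (Alpha op val bop) (TQ ν val)),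
    Relax Mi Φ Φ' ∧ OccursOnce Φ' ∧
    BuildsH (fun f' => G (Mi f')) sem bsem nsem vtrue vfalse Φ' H' ∧
    FPRet (fun f => {v | ∃ f' : F, Mi f' = f ∧ OccursAt Φ' f' v})
      (finalize vtrue H') (fun _ => none) R

/-- Returning traces of the CEGIS loop `Synthesize` (Algorithm 1).
`SynthRet … P Φ R` holds iff, starting from candidate programs `P` and
accumulated ground specification `Φ`, the loop can return the programs `R`:
either the current candidates verify against the relational specification `Ψ`,
or a new relational counterexample `Ψ σ` (an instantiation of the universal
quantifiers of `Ψ` violated by `P`) is conjoined to `Φ` and inductive synthesis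
produces new candidates. -/
inductive SynthRet {op val bop ν F₀ : Type} [Inhabited val] [DecidableEq F₀]
    (G : F₀ → Grammar op ν) (sem : op → List val → val) (bsem : bop → val → val → val)
    (nsem : val → val) (vtrue vfalse : val) (andOp : bop)
    (Ψ : (ℕ → val) → GS F₀ val bop)
    (verify : (F₀ → Tree (Alpha op val bop)) → Prop) :
    (F₀ → Tree (Alpha op val bop)) → GS F₀ val bop → (F₀ → Tree (Alpha op val bop)) → Prop where
  | verified (P : F₀ → Tree (Alpha op val bop)) (Φ : GS F₀ val bop) :
      verify P →
      SynthRet G sem bsem nsem vtrue vfalse andOp Ψ verify P Φ P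
  | refine (P P' R : F₀ → Tree (Alpha op val bop)) (Φ : GS F₀ val bop) (σ : ℕ → val) :
      ¬ verify P →
      ¬ Satisfies sem bsem nsem vtrue P (Ψ σ) →
      InductiveSynth G sem bsem nsem vtrue vfalse (GS.bin andOp Φ (Ψ σ)) P' →
      SynthRet G sem bsem nsem vtrue vfalse andOp Ψ verify P' (GS.bin andOp Φ (Ψ σ)) R →
      SynthRet G sem bsem nsem vtrue vfalse andOp Ψ verify P Φ R




/-! ### Auxiliary lemmas for the soundness proof -/

def untag {ν val : Type} (q : TQ ν val) : TQ ν val := (q.1.tail, q.2)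

lemma untag_tag {ν val : Type} (i : ℕ) (q : TQ ν val) : untag (tagState i q) = q := rfl

lemma mem_zip_of_getElem? {α β : Type} {l₁ : List α} {l₂ : List β} {j : ℕ} {b : β}
    (hlen : l₁.length = l₂.length) (h : l₂[j]? = some b) :
    ∃ a, l₁[j]? = some a ∧ (a, b) ∈ l₁.zip l₂ := by
  have hjl : j < l₂.length := by
    by_contra hc
    rw [List.getElem?_eq_none (le_of_not_gt hc)] at h
    exact nomatch h
  have hj1 : j < l₁.length := by omega
  have hb : b = l₂[j] := by
    rw [List.getElem?_eq_getElem hjl] at h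
    exact (Option.some.inj h).symm
  subst hb
  refine ⟨l₁[j], List.getElem?_eq_getElem hj1, ?_⟩
  have hz : j < (l₁.zip l₂).length := by rw [List.length_zip]; omega
  have he : (l₁.zip l₂)[j] = (l₁[j], l₂[j]) := List.getElem_zip
  rw [← he]
  exact List.getElem_mem hz

/-- Well-formedness invariants of constructed HFTAs. -/
def Wf {α ν val : Type} (H : HFTA α (TQ ν val)) : Prop :=
  ([] ∈ H.nodes) ∧
  (∀ v ∈ H.nodes, ∀ v' ∈ H.children v, v' ∈ H.nodes) ∧
  (∀ v ∈ H.nodes, ∀ q ∈ (H.fta v).finals, q.1 = v) ∧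
  (∀ v : List ℕ, ∀ v' ∈ H.children v, v' ≠ [])

lemma combine_fta_nil {α ν val : Type} (A : FTA α (SymT ν × val))
    (Hs : List (HFTA α (TQ ν val))) :
    (combine A Hs).fta [] = mapFTA (fun q => (([] : List ℕ), q)) A := rfl

lemma combine_fta_cons {α ν val : Type} (A : FTA α (SymT ν × val))
    {Hs : List (HFTA α (TQ ν val))} {i : ℕ} {Hi : HFTA α (TQ ν val)}
    (hi : Hs[i]? = some Hi) (v : List ℕ) :
    (combine A Hs).fta (i :: v) = mapFTA (tagState i) (Hi.fta v) := by
  simp only [combine, hi]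

lemma combine_children_nil {α ν val : Type} (A : FTA α (SymT ν × val))
    (Hs : List (HFTA α (TQ ν val))) :
    (combine A Hs).children [] = (List.range Hs.length).map (fun i => [i]) := rfl

lemma combine_children_cons {α ν val : Type} (A : FTA α (SymT ν × val))
    {Hs : List (HFTA α (TQ ν val))} {i : ℕ} {Hi : HFTA α (TQ ν val)}
    (hi : Hs[i]? = some Hi) (v : List ℕ) :
    (combine A Hs).children (i :: v) = (Hi.children v).map (i :: ·) := by
  simp only [combine, hi]

lemma combine_wf {α ν val : Type} (A : FTA α (SymT ν × val))
    (Hs : List (HFTA α (TQ ν val)))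
    (h : ∀ (j : ℕ) (Hj : HFTA α (TQ ν val)), Hs[j]? = some Hj → Wf Hj) : Wf (combine A Hs) := by
  refine ⟨Or.inl rfl, ?_, ?_, ?_⟩
  · intro v hv v' hv'
    cases v with
    | nil =>
      rw [combine_children_nil] at hv'
      obtain ⟨j, hj, rfl⟩ := List.mem_map.mp hv'
      have hjl : j < Hs.length := List.mem_range.mp hj
      have hjs : Hs[j]? = some Hs[j] := List.getElem?_eq_getElem hjl
      exact Or.inr ⟨j, Hs[j], [], hjs, (h j _ hjs).1, rfl⟩
    | cons i w =>
      rcases hv with h0 | ⟨i', Hi, w', hi', hw', heq⟩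
      · exact absurd h0 (by simp)
      · injection heq with h1 h2
        subst h1; subst h2
        rw [combine_children_cons A hi'] at hv'
        obtain ⟨u, hu, rfl⟩ := List.mem_map.mp hv'
        exact Or.inr ⟨i, Hi, u, hi', (h i Hi hi').2.1 _ hw' _ hu, rfl⟩
  · intro v hv q hq
    cases v with
    | nil =>
      rw [combine_fta_nil] at hq
      obtain ⟨q0, _, rfl⟩ := hq
      rfl
    | cons i w =>
      rcases hv with h0 | ⟨i', Hi, w', hi', hw', heq⟩
      · exact absurd h0 (by simp)
      · injection heq with h1 h2
        subst h1; subst h2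
        rw [combine_fta_cons A hi'] at hq
        obtain ⟨q0, hq0, rfl⟩ := hq
        have hq01 := (h i Hi hi').2.2.1 _ hw' _ hq0
        simp [tagState, hq01]
  · intro v v' hv'
    cases v with
    | nil =>
      rw [combine_children_nil] at hv'
      obtain ⟨j, _, rfl⟩ := List.mem_map.mp hv'
      simp
    | cons i w =>
      rcases hHs : Hs[i]? with _ | Hi
      · have he : (combine A Hs).children (i :: w) = [] := by simp only [combine, hHs]
        rw [he] at hv'
        exact absurd hv' List.not_mem_nil
      · rw [combine_children_cons A hHs] at hv'
        obtain ⟨u, _, rfl⟩ := List.mem_map.mp hv'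
        simp

lemma buildsH_wf {op val bop ν F : Type} {gram : F → Grammar op ν}
    {sem : op → List val → val} {bsem : bop → val → val → val} {nsem : val → val}
    {vtrue vfalse : val} {t : GS F val bop} {H : HFTA (Alpha op val bop) (TQ ν val)}
    (h : BuildsH gram sem bsem nsem vtrue vfalse t H) : Wf H := by
  induction h with
  | cst c =>
    refine combine_wf _ _ ?_
    intro j Hj hj
    simp at hj
  | app f ts Hs hlen hb ih =>
    refine combine_wf _ _ ?_
    intro j Hj hj
    obtain ⟨a, _, hmem⟩ := mem_zip_of_getElem? hlen hj
    exact ih _ hmem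
  | bin b ψ₁ ψ₂ H₁ H₂ h₁ h₂ ih₁ ih₂ =>
    refine combine_wf _ _ ?_
    intro j Hj hj
    match j with
    | 0 => simp only [List.getElem?_cons_zero] at hj; injection hj with hj; subst hj; exact ih₁
    | 1 =>
      simp only [List.getElem?_cons_succ, List.getElem?_cons_zero] at hj
      injection hj with hj; subst hj; exact ih₂
    | (n+2) => simp at hj
  | neg ψ H₁ h₁ ih₁ =>
    refine combine_wf _ _ ?_
    intro j Hj hj
    match j with
    | 0 => simp only [List.getElem?_cons_zero] at hj; injection hj with hj; subst hj; exact ih₁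
    | (n+1) => simp at hj

lemma run_mapFTA {op val bop Q Q' : Type} {g : Q → Q'} {u : Q' → Q}
    (hu : ∀ q, u (g q) = q)
    {A : FTA (Alpha op val bop) Q} {lf : ℕ → Q'} {t : Tree (Alpha op val bop)} {q' : Q'}
    (h : RunFrom (mapFTA g A) lf t q') :
    ∃ q, g q = q' ∧ RunFrom A (fun i => u (lf i)) t q := by
  induction h with
  | node a ts qs q htr hlf hlen hch ih =>
    obtain ⟨a0, qs0, q0, htr0, heq⟩ := htr
    simp only [Prod.mk.injEq] at heq
    obtain ⟨ha, hqs, hq⟩ := heq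
    subst ha; subst hqs; subst hq
    refine ⟨q0, rfl, RunFrom.node a ts qs0 q0 htr0 ?_ ?_ ?_⟩
    · intro i hi
      show q0 = u (lf i)
      rw [← hlf i hi, hu]
    · simpa using hlen
    · intro p hp
      have hp' : (p.1, g p.2) ∈ ts.zip (qs0.map g) := by
        rw [List.zip_map_right]
        exact List.mem_map.mpr ⟨p, hp, rfl⟩
      obtain ⟨qq, hqq, hr⟩ := ih _ hp'
      have hqp : qq = p.2 := by
        have h2 := congrArg u hqq
        rwa [hu, hu] at h2
      rwa [hqp] at hr

lemma run_buildFTA {op val bop ν : Type}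
    {Gr : Grammar op ν} {sem : op → List val → val} (bsem : bop → val → val → val)
    (nsem : val → val) {arity : ℕ} {init : ℕ → Set val}
    {lf : ℕ → TQ ν val} {t : Tree (Alpha op val bop)} {q : TQ ν val}
    (h : RunFrom (mapFTA (fun q => (([] : List ℕ), q)) (buildFTA bop Gr sem arity init)) lf t q) :
    ∃ s c, q = ([], s, c) ∧ Derives Gr s t ∧
      ∀ args : ℕ → val,
        (∀ i c', i < arity → lf i = ([], SymT.var i, c') → args i = c') →
        EvalsTo sem bsem nsem args t c := by
  induction h with
  | node a ts qs q htr hlf hlen hch ih =>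
    obtain ⟨a0, qs0, q0, htr0, heq⟩ := htr
    simp only [Prod.mk.injEq] at heq
    obtain ⟨ha, hqs, hq⟩ := heq
    subst ha; subst hqs; subst hq
    cases htr0 with
    | input i c hlt hc =>
      have hts : ts = [] := List.length_eq_zero_iff.mp (by simpa using hlen)
      subst hts
      refine ⟨SymT.var i, c, rfl, Derives.var i, ?_⟩
      intro args hargs
      have h1 : lf i = ([], SymT.var i, c) := (hlf i rfl).symm
      have h2 := hargs i c hlt h1
      rw [← h2]
      exact EvalsTo.var i
    | prod s o ss cs hp hl hst =>
      have hlen2 : ts.length = (ss.zip cs).length := by simpa using hlen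
      have hlss : (ss.zip cs).length = ss.length := by rw [List.length_zip, hl, min_self]
      have key : ∀ j (hj : j < ts.length),
          ∃ (h1 : j < ss.length) (h2 : j < cs.length),
            Derives Gr ss[j] ts[j] ∧
            ∀ args : ℕ → val,
              (∀ i c', i < arity → lf i = ([], SymT.var i, c') → args i = c') →
              EvalsTo sem bsem nsem args ts[j] cs[j] := by
        intro j hj
        have h1 : j < ss.length := by omega
        have h2 : j < cs.length := by omega
        have hjz : j < (ss.zip cs).length := by omega
        have hjq : j < (ts.zip ((ss.zip cs).map (fun q => ((([] : List ℕ), q) : TQ ν val)))).length := by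
          rw [List.length_zip, List.length_map]; omega
        have e1 : (ts.zip ((ss.zip cs).map (fun q => ((([] : List ℕ), q) : TQ ν val))))[j]
            = (ts[j], (([] : List ℕ), ss[j], cs[j])) := by
          rw [List.getElem_zip, List.getElem_map, List.getElem_zip]
        have hmem : (ts[j], ((([] : List ℕ), ss[j], cs[j]) : TQ ν val))
            ∈ ts.zip ((ss.zip cs).map (fun q => ((([] : List ℕ), q) : TQ ν val))) := by
          rw [← e1]
          exact List.getElem_mem hjq
        obtain ⟨s', c', heq', hder, hev⟩ := ih _ hmem
        simp only [Prod.mk.injEq] at heq'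
        obtain ⟨hs', hc'⟩ := heq'.2
        subst hs'; subst hc'
        exact ⟨h1, h2, hder, hev⟩
      refine ⟨SymT.nt s, sem o cs, rfl, ?_, ?_⟩
      · refine Derives.prod s o ss ts hp (by omega) ?_
        intro p hpmem
        obtain ⟨j, hjz, hpe⟩ := List.mem_iff_getElem.mp hpmem
        have hjt : j < ts.length := by rw [List.length_zip] at hjz; omega
        obtain ⟨h1, h2, hder, _⟩ := key j hjt
        have hpe2 : p = (ss[j], ts[j]) := by rw [← hpe, List.getElem_zip]
        rw [hpe2]
        exact hder
      · intro args hargs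
        refine EvalsTo.dsl o ts cs (by omega) ?_
        intro p hpmem
        obtain ⟨j, hjz, hpe⟩ := List.mem_iff_getElem.mp hpmem
        have hjt : j < ts.length := by rw [List.length_zip] at hjz; omega
        obtain ⟨h1, h2, _, hev⟩ := key j hjt
        have hpe2 : p = (ts[j], cs[j]) := by rw [← hpe, List.getElem_zip]
        rw [hpe2]
        exact hev args hargs

lemma combine_child_accept {op val bop ν : Type}
    {A : FTA (Alpha op val bop) (SymT ν × val)} {Hs : List (HFTA (Alpha op val bop) (TQ ν val))}
    (hw : ∀ (j : ℕ) (Hj : HFTA (Alpha op val bop) (TQ ν val)), Hs[j]? = some Hj → Wf Hj)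
    {i : ℕ} {Hi : HFTA (Alpha op val bop) (TQ ν val)} (hi : Hs[i]? = some Hi)
    {T : List ℕ → Tree (Alpha op val bop)} {ρ : List ℕ → TQ ν val}
    {leaf : List ℕ → ℕ → TQ ν val}
    (hacc : HAcceptWith (combine A Hs) T ρ leaf) :
    HAcceptWith Hi (fun v => T (i :: v)) (fun v => untag (ρ (i :: v)))
      (fun v j => untag (leaf (i :: v) j)) := by
  have hcwf : Wf (combine A Hs) := combine_wf A Hs hw
  intro v hv
  have hmem : (i :: v) ∈ (combine A Hs).nodes := Or.inr ⟨i, Hi, v, hi, hv, rfl⟩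
  obtain ⟨hfin, hrun, hint⟩ := hacc _ hmem
  rw [combine_fta_cons A hi] at hfin hrun
  obtain ⟨q0, hq0, hρ⟩ := hfin
  refine ⟨?_, ?_, ?_⟩
  · show untag (ρ (i :: v)) ∈ (Hi.fta v).finals
    rw [← hρ, untag_tag]
    exact hq0
  · obtain ⟨qq, hqq, hr⟩ := run_mapFTA (untag_tag i) hrun
    have hq : qq = untag (ρ (i :: v)) := by rw [← hqq, untag_tag]
    show RunFrom (Hi.fta v) (fun j => untag (leaf (i :: v) j)) (T (i :: v)) (untag (ρ (i :: v)))
    rw [← hq]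
    exact hr
  · intro j v' hj
    have hj' : ((combine A Hs).children (i :: v))[j]? = some (i :: v') := by
      rw [combine_children_cons A hi, List.getElem?_map, hj]
      rfl
    have hedge := hint j (i :: v') hj'
    have hv'mem : v' ∈ Hi.children v := List.mem_of_getElem? hj
    have hv'node : (i :: v') ∈ (combine A Hs).nodes :=
      hcwf.2.1 _ hmem _ (by
        rw [combine_children_cons A hi]
        exact List.mem_map.mpr ⟨v', hv'mem, rfl⟩)
    have hpos : (ρ (i :: v')).1 = i :: v' :=
      hcwf.2.2.1 _ hv'node _ (hacc _ hv'node).1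
    rcases hedge with ⟨i', Hi', qe, qe', hi', hqe, heq⟩ | ⟨i', Hi', qe, hi', hqe, heq⟩
    · simp only [Prod.mk.injEq] at heq
      obtain ⟨he1, he2⟩ := heq
      have hcons : i :: v' = i' :: qe.1 := by
        have h' := congrArg Prod.fst he1
        rw [hpos] at h'
        simpa [tagState] using h'
      injection hcons with hA hB
      subst hA
      have hHi : Hi' = Hi := by
        rw [hi'] at hi
        exact Option.some.inj hi
      rw [hHi] at hqe
      have hqe1 : qe = untag (ρ (i :: v')) := by rw [he1, untag_tag]
      have hqe2 : qe' = untag (leaf (i :: v) j) := by rw [he2, untag_tag]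
      show (untag (ρ (i :: v')), untag (leaf (i :: v) j)) ∈ Hi.inter
      rw [← hqe1, ← hqe2]
      exact hqe
    · simp only [Prod.mk.injEq] at heq
      obtain ⟨he1, he2⟩ := heq
      have hcons : i :: v' = i' :: qe.1 := by
        have h' := congrArg Prod.fst he1
        rw [hpos] at h'
        simpa [tagState] using h'
      injection hcons with hA hB
      subst hA
      have hHi : Hi' = Hi := by
        rw [hi'] at hi
        exact Option.some.inj hi
      rw [hHi] at hqe
      have hwHi := hw i Hi hi
      have hqe1 : qe.1 = [] := hwHi.2.2.1 [] hwHi.1 qe hqe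
      have hne := hwHi.2.2.2 v v' hv'mem
      exact absurd (hB.trans hqe1) hne

lemma combine_root_leaf {op val bop ν : Type}
    {A : FTA (Alpha op val bop) (SymT ν × val)} {Hs : List (HFTA (Alpha op val bop) (TQ ν val))}
    (hw : ∀ (j : ℕ) (Hj : HFTA (Alpha op val bop) (TQ ν val)), Hs[j]? = some Hj → Wf Hj)
    {T : List ℕ → Tree (Alpha op val bop)} {ρ : List ℕ → TQ ν val}
    {leaf : List ℕ → ℕ → TQ ν val}
    (hacc : HAcceptWith (combine A Hs) T ρ leaf)
    {i : ℕ} {Hi : HFTA (Alpha op val bop) (TQ ν val)} (hi : Hs[i]? = some Hi)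
    {i' : ℕ} {c' : val}
    (hlf : leaf [] i = ([], SymT.var i', c')) : c' = (ρ [i]).2.2 := by
  have hil : i < Hs.length := by
    by_contra hc
    rw [List.getElem?_eq_none (le_of_not_gt hc)] at hi
    exact nomatch hi
  obtain ⟨_, _, hint⟩ := hacc [] (Or.inl rfl)
  have hj' : ((combine A Hs).children [])[i]? = some [i] := by
    rw [combine_children_nil, List.getElem?_map, List.getElem?_range hil]
    rfl
  have hedge := hint i [i] hj'
  rcases hedge with ⟨i'', Hi', qe, qe', hi'', hqe, heq⟩ | ⟨i'', Hi', qe, hi'', hqe, heq⟩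
  · simp only [Prod.mk.injEq] at heq
    obtain ⟨_, he2⟩ := heq
    rw [hlf] at he2
    have := congrArg Prod.fst he2
    simp [tagState] at this
  · simp only [Prod.mk.injEq] at heq
    obtain ⟨he1, he2⟩ := heq
    rw [hlf] at he2
    simp only [Prod.mk.injEq] at he2
    have hc : c' = qe.2.2 := he2.2.2
    have hv : qe.2.2 = (ρ [i]).2.2 := by rw [he1]; rfl
    rw [hc, hv]

lemma hfta_sound_aux {op val bop ν F F₀ : Type} [Inhabited val]
    (G : F₀ → Grammar op ν) (Minv : F → F₀)
    (sem : op → List val → val) (bsem : bop → val → val → val) (nsem : val → val)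
    (vtrue vfalse : val)
    {t : GS F val bop} {H : HFTA (Alpha op val bop) (TQ ν val)}
    (hbuild : BuildsH (fun f => G (Minv f)) sem bsem nsem vtrue vfalse t H) :
    IsTerm t →
    ∀ (T : List ℕ → Tree (Alpha op val bop)) (ρ : List ℕ → TQ ν val)
      (leaf : List ℕ → ℕ → TQ ν val), HAcceptWith H T ρ leaf →
    (∀ (f : F) (p : List ℕ), OccursAt t f p → ConformsTo (G (Minv f)) (T p)) ∧
    (∀ I : F → Tree (Alpha op val bop),
        (∀ (f : F) (p : List ℕ), OccursAt t f p → I f = T p) →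
        SpecEval sem bsem nsem I t (ρ []).2.2) := by
  induction hbuild with
  | cst c =>
    intro _ T ρ leaf hacc
    refine ⟨?_, ?_⟩
    · intro f p hocc
      cases hocc
    · intro I hI
      have hfin := (hacc [] (Or.inl rfl)).1
      rw [combine_fta_nil] at hfin
      obtain ⟨q0, hq0, hρ⟩ := hfin
      have hq0e : q0 = (SymT.start, c) := hq0
      subst hq0e
      rw [← hρ]
      exact SpecEval.cst c
  | app f ts Hs hlen hb ih =>
    intro hterm T ρ leaf hacc
    have hts : ∀ t' ∈ ts, IsTerm t' := by
      cases hterm with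
      | app _ _ h => exact h
    have hw : ∀ (j : ℕ) (Hj : HFTA (Alpha op val bop) (TQ ν val)), Hs[j]? = some Hj → Wf Hj := by
      intro j Hj hj
      obtain ⟨a, _, hmem⟩ := mem_zip_of_getElem? hlen hj
      exact buildsH_wf (hb _ hmem)
    have hchild : ∀ j (hj : j < Hs.length),
        (∀ (f' : F) (p : List ℕ), OccursAt (ts[j]'(by omega)) f' p →
            ConformsTo (G (Minv f')) (T (j :: p))) ∧
        (∀ I : F → Tree (Alpha op val bop),
            (∀ (f' : F) (p : List ℕ), OccursAt (ts[j]'(by omega)) f' p → I f' = T (j :: p)) →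
            SpecEval sem bsem nsem I (ts[j]'(by omega)) (ρ [j]).2.2) := by
      intro j hj
      have hjt : j < ts.length := by omega
      have hjs : Hs[j]? = some Hs[j] := List.getElem?_eq_getElem hj
      have hzb : j < (ts.zip Hs).length := by rw [List.length_zip]; omega
      have hze : (ts.zip Hs)[j] = (ts[j], Hs[j]) := List.getElem_zip
      have hmem : (ts[j], Hs[j]) ∈ ts.zip Hs := by
        rw [← hze]
        exact List.getElem_mem hzb
      have hterm' : IsTerm ts[j] := hts _ (List.getElem_mem hjt)
      have hacc' := combine_child_accept hw hjs hacc
      exact ih _ hmem hterm' _ _ _ hacc'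
    obtain ⟨hfin, hrun, hint⟩ := hacc [] (Or.inl rfl)
    rw [combine_fta_nil] at hfin hrun
    obtain ⟨s, c, hq, hder, hev⟩ := run_buildFTA bsem nsem hrun
    obtain ⟨q0, hq0, hρ⟩ := hfin
    have hq0e : q0 = (s, c) := by
      have h2 := hρ.trans hq
      simpa using h2
    have hs : s = SymT.nt (G (Minv f)).start := by
      have h3 := hq0.2
      rw [hq0e] at h3
      exact h3
    rw [hs] at hder
    refine ⟨?_, ?_⟩
    · intro f' p hocc
      cases hocc with
      | here => exact hder
      | app _ _ _ jj t' p' hget hocc' =>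
        have hjl : jj < ts.length := by
          by_contra hc2
          rw [List.getElem?_eq_none (le_of_not_gt hc2)] at hget
          exact nomatch hget
        have ht' : t' = ts[jj] := by
          rw [List.getElem?_eq_getElem hjl] at hget
          exact (Option.some.inj hget).symm
        subst ht'
        exact (hchild jj (by omega)).1 _ _ hocc'
    · intro I hI
      rw [hq]
      show SpecEval sem bsem nsem I (GS.app f ts) c
      refine SpecEval.app f ts ((List.range Hs.length).map fun j => (ρ [j]).2.2) c
        (by rw [List.length_map, List.length_range]; omega) ?_ ?_
      · intro p hp
        obtain ⟨j, hjz, hpe⟩ := List.mem_iff_getElem.mp hp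
        have hjt : j < ts.length := by
          rw [List.length_zip, List.length_map, List.length_range] at hjz
          omega
        have hjh : j < Hs.length := by omega
        have hpe2 : p = (ts[j], (ρ [j]).2.2) := by
          rw [← hpe, List.getElem_zip, List.getElem_map, List.getElem_range]
        rw [hpe2]
        refine (hchild j hjh).2 I ?_
        intro f' pp hocc
        exact hI f' (j :: pp)
          (OccursAt.app f f' ts j ts[j] pp (List.getElem?_eq_getElem hjt) hocc)
      · have hIf : I f = T [] := hI f [] (OccursAt.here f ts)
        rw [hIf]
        refine hev (fun i => ((List.range Hs.length).map fun j => (ρ [j]).2.2).getD i default) ?_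
        intro i c' hi hlf
        have hiH : i < Hs.length := by omega
        have hc' : c' = (ρ [i]).2.2 :=
          combine_root_leaf hw hacc (List.getElem?_eq_getElem hiH) hlf
        rw [hc']
        show List.getD ((List.range Hs.length).map fun j => (ρ [j]).2.2) i default = (ρ [i]).2.2
        have hil : i < ((List.range Hs.length).map fun j => (ρ [j]).2.2).length := by
          rw [List.length_map, List.length_range]; omega
        rw [List.getD_eq_getElem _ _ hil, List.getElem_map, List.getElem_range]
  | bin b ψ₁ ψ₂ H₁ H₂ h₁ h₂ ih₁ ih₂ =>
    intro hterm
    cases hterm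
  | neg ψ H₁ h₁ ih₁ =>
    intro hterm
    cases hterm

/-- Soundness of HFTA construction on terms (Lemma A.2). -/
theorem hfta_term_soundness
    {op val bop ν F F₀ : Type} [Inhabited val]
    (G : F₀ → Grammar op ν) (Minv : F → F₀)
    (sem : op → List val → val) (bsem : bop → val → val → val) (nsem : val → val)
    (vtrue vfalse : val)
    (t : GS F val bop) (H : HFTA (Alpha op val bop) (TQ ν val))
    (hterm : IsTerm t) (honce : OccursOnce t)
    (hbuild : BuildsH (fun f => G (Minv f)) sem bsem nsem vtrue vfalse t H)
    (T : List ℕ → Tree (Alpha op val bop))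
    (ρ : List ℕ → TQ ν val) (leaf : List ℕ → ℕ → TQ ν val)
    (hacc : HAcceptWith H T ρ leaf) :
    (∀ (f : F) (p : List ℕ), OccursAt t f p → ConformsTo (G (Minv f)) (T p)) ∧
    (∀ I : F → Tree (Alpha op val bop),
        (∀ (f : F) (p : List ℕ), OccursAt t f p → I f = T p) →
        SpecEval sem bsem nsem I t (ρ []).2.2) :=
  hfta_sound_aux G Minv sem bsem nsem vtrue vfalse hbuild hterm T ρ leaf hacc

end Relish
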